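/- Let n ≥ 1 and k be integers with 2n + 1 ≤ k. Every k-peg Hanoi group generated by a set S with 1 ∈ S ⊆ R̄_{k,n} is contracting. -/

import Mathlib

/-!
Common framework: automorphisms of the rooted tree `X_k^*`, root permutations,
sections, self-similar and contracting groups, Hanoi automorphisms and Hanoi
groups, following Makisumi–Stadnyk–Steinhurst, "Modified Hanoi Towers Groups
and Limit Spaces".

A word `x_n … x_1` over the alphabet `X_k = Fin k` is encoded as the list
`[x_n, …, x_1]`, whose head `x_n` is the first letter, i.e. the letter that a
tree automorphism reads (and permutes) first.
-/

namespace Hanoi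

/-- Words over the alphabet `X_k = Fin k`. -/
abbrev Word (k : ℕ) := List (Fin k)

/-- `e` is an automorphism of the rooted tree `X_k^*`: it fixes the root
(the empty word), preserves word length (levels) and preserves the tree
structure (words sharing an initial segment of length `n` are sent to words
sharing an initial segment of length `n`). -/
def IsTreeAut {k : ℕ} (e : Equiv.Perm (Word k)) : Prop :=
  (∀ w : Word k, (e w).length = w.length) ∧
    ∀ (w v : Word k) (n : ℕ), w.take n = v.take n → (e w).take n = (e v).take n

open Classical in
/-- The root permutation `σ_e` of a tree automorphism `e` (its action on
one-letter words). -/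
noncomputable def rootPerm {k : ℕ} (e : Equiv.Perm (Word k)) : Equiv.Perm (Fin k) :=
  if h : Function.Bijective (fun x : Fin k => ((e [x]).head?.getD x)) then
    Equiv.ofBijective _ h
  else 1

open Classical in
/-- The section `e|_x` of `e` at a letter `x`: the unique automorphism with
`e (x :: w) = σ_e x :: (e|_x) w` for all words `w`. -/
noncomputable def sec {k : ℕ} (e : Equiv.Perm (Word k)) (x : Fin k) : Equiv.Perm (Word k) :=
  if h : Function.Bijective (fun w : Word k => (e (x :: w)).tail) then
    Equiv.ofBijective _ h
  else 1

/-- The section `e|_v` of `e` at a word `v = x_n … x_1`, defined by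
`e|_v = (e|_{x_n})|_{x_{n-1} … x_1}`. -/
noncomputable def secW {k : ℕ} (e : Equiv.Perm (Word k)) : Word k → Equiv.Perm (Word k)
  | [] => e
  | x :: v => secW (sec e x) v

/-- A subgroup of the permutations of `X_k^*` is self-similar if it consists of
tree automorphisms and is closed under taking sections. -/
def IsSelfSimilar {k : ℕ} (G : Subgroup (Equiv.Perm (Word k))) : Prop :=
  (∀ g ∈ G, IsTreeAut g) ∧ ∀ g ∈ G, ∀ x : Fin k, sec g x ∈ G

/-- A self-similar group `G` is contracting if there is a finite subset `N ⊆ G`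
such that for every `g ∈ G` all sections of `g` at words of length at least
some `m` lie in `N`. -/
def IsContracting {k : ℕ} (G : Subgroup (Equiv.Perm (Word k))) : Prop :=
  ∃ N : Set (Equiv.Perm (Word k)), N.Finite ∧ N ⊆ (G : Set (Equiv.Perm (Word k))) ∧
    ∀ g ∈ G, ∃ m : ℕ, ∀ v : Word k, m ≤ v.length → secW g v ∈ N

/-- `N` is the nucleus of `G`: a smallest finite subset of `G` catching all
deep enough sections of every element of `G`. -/
def IsNucleus {k : ℕ} (G : Subgroup (Equiv.Perm (Word k)))
    (N : Set (Equiv.Perm (Word k))) : Prop :=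
  (N.Finite ∧ N ⊆ (G : Set (Equiv.Perm (Word k))) ∧
    ∀ g ∈ G, ∃ m : ℕ, ∀ v : Word k, m ≤ v.length → secW g v ∈ N) ∧
  ∀ N' : Set (Equiv.Perm (Word k)), N'.Finite → N' ⊆ (G : Set (Equiv.Perm (Word k))) →
    (∀ g ∈ G, ∃ m : ℕ, ∀ v : Word k, m ≤ v.length → secW g v ∈ N') → N ⊆ N'

/-- `a` is a Hanoi automorphism with set of inactive pegs `Q`: the section at
each active peg (element of the complement of `Q`) is trivial, the section at
each inactive peg is `a` itself, and the root permutation fixes each inactive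
peg. -/
def IsHanoiWith {k : ℕ} (a : Equiv.Perm (Word k)) (Q : Set (Fin k)) : Prop :=
  IsTreeAut a ∧ (∀ i ∉ Q, sec a i = 1) ∧ (∀ j ∈ Q, sec a j = a) ∧
    ∀ j ∈ Q, rootPerm a j = j

/-- `a` is a `k`-peg Hanoi automorphism. -/
def IsHanoiAut {k : ℕ} (a : Equiv.Perm (Word k)) : Prop := ∃ Q, IsHanoiWith a Q

open Classical in
/-- The set `Q_a` of inactive pegs of a Hanoi automorphism `a`; by convention
`Q_1 = X_k` (for `a ≠ 1` the set of inactive pegs is uniquely determined). -/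
noncomputable def inactivePegs {k : ℕ} (a : Equiv.Perm (Word k)) : Set (Fin k) :=
  if a = 1 then Set.univ
  else if h : ∃ Q, IsHanoiWith a Q then h.choose else ∅

/-- `S_{k,q}`: the set of Hanoi automorphisms over `X_k` with exactly `q`
inactive pegs. -/
noncomputable def hanoiSet (k q : ℕ) : Set (Equiv.Perm (Word k)) :=
  {a | IsHanoiAut a ∧ (inactivePegs a).ncard = q}

/-- `L = [s_n, …, s_1]` is a representation of `g` over the generating set `S`:
each `s_i ∈ S ∪ S⁻¹` and `g = s_n ⋯ s_2 s_1`. -/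
def IsRepOf {k : ℕ} (S : Set (Equiv.Perm (Word k))) (L : List (Equiv.Perm (Word k)))
    (g : Equiv.Perm (Word k)) : Prop :=
  (∀ s ∈ L, s ∈ S ∨ s⁻¹ ∈ S) ∧ L.prod = g

/-- The length `l(g)` of `g` with respect to `S`: the length of a minimal
representation (`0` for the identity). -/
noncomputable def repLength {k : ℕ} (S : Set (Equiv.Perm (Word k)))
    (g : Equiv.Perm (Word k)) : ℕ :=
  sInf {n | ∃ L, IsRepOf S L g ∧ L.length = n}

/-- The essential set of a representation: the intersection of the sets of
inactive pegs of its letters. -/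
noncomputable def essSet {k : ℕ} (L : List (Equiv.Perm (Word k))) : Set (Fin k) :=
  ⋂ s ∈ L, inactivePegs s

/-- The prenucleus of `G`: the set of elements `g ∈ G` with `g|_j = g` for some
letter `j`. -/
noncomputable def preNucleus {k : ℕ} (G : Subgroup (Equiv.Perm (Word k))) :
    Set (Equiv.Perm (Word k)) :=
  {g | g ∈ G ∧ ∃ j : Fin k, sec g j = g}

/-- The underlying function of the Hanoi Towers move `a_{ij}`: it changes the
first occurrence of `i` or `j` in a word by means of the transposition `(i j)`
and leaves the rest of the word unchanged. -/
def hanoiMoveFun {k : ℕ} (i j : Fin k) : Word k → Word k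
  | [] => []
  | x :: w => if x = i ∨ x = j then Equiv.swap i j x :: w else x :: hanoiMoveFun i j w

theorem hanoiMoveFun_involutive {k : ℕ} (i j : Fin k) :
    Function.Involutive (hanoiMoveFun i j) := by
  intro w
  induction w with
  | nil => rfl
  | cons x t ih =>
    by_cases h : x = i ∨ x = j
    · have h2 : Equiv.swap i j x = i ∨ Equiv.swap i j x = j := by
        rcases h with h | h <;> subst h <;> simp
      simp only [hanoiMoveFun, if_pos h, if_pos h2, Equiv.swap_apply_self]
    · simp only [hanoiMoveFun, if_neg h, ih]

/-- The Hanoi Towers move `a_{ij}`, as a permutation of `X_k^*`: its root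
permutation is the transposition `(i j)`, its sections at `i` and `j` are
trivial and all its other sections equal `a_{ij}` itself. -/
def hanoiMove {k : ℕ} (i j : Fin k) : Equiv.Perm (Word k) :=
  (hanoiMoveFun_involutive i j).toPerm

/-- The orbit of the letter `j` under the subgroup of `Sym(X_k)` generated by
the root permutations of the elements of `T`. -/
noncomputable def orbT {k : ℕ} (T : Finset (Equiv.Perm (Word k))) (j : Fin k) : Set (Fin k) :=
  MulAction.orbit (Subgroup.closure ((fun a => rootPerm a) '' (T : Set (Equiv.Perm (Word k))))) j

/-- The set `Fix(T)` of letters fixed by the root permutation of every element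
of `T`. -/
noncomputable def fixT {k : ℕ} (T : Finset (Equiv.Perm (Word k))) : Set (Fin k) :=
  {x | ∀ s ∈ T, rootPerm s x = x}

/-- Condition (*) on a generating set `S` of Hanoi automorphisms: for every
finite `T ⊆ S` with nonempty essential set and every letter `j ∉ Fix(T)`,
the orbit of `j` misses the inactive pegs of some element of `T`. -/
noncomputable def CondStar {k : ℕ} (S : Set (Equiv.Perm (Word k))) : Prop :=
  ∀ T : Finset (Equiv.Perm (Word k)), (T : Set (Equiv.Perm (Word k))) ⊆ S →
    (⋂ s ∈ T, inactivePegs s).Nonempty →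
    ∀ j : Fin k, j ∉ fixT T →
      ∃ s ∈ T, orbT T j ∩ inactivePegs s = ∅

open Classical in
/-- `d(g)`: the least number of distinct generators occurring among all
representations of `g` having nonempty essential set. -/
noncomputable def dCount {k : ℕ} (S : Set (Equiv.Perm (Word k)))
    (g : Equiv.Perm (Word k)) : ℕ :=
  sInf {M | ∃ L, IsRepOf S L g ∧ (essSet L).Nonempty ∧ L.toFinset.card = M}

/-- `S` is fully symmetric: for every non-identity `a ∈ S` and every
`φ ∈ Sym(X_k)`, the Hanoi automorphism `φ·a` with inactive pegs `φ(Q_a)` and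
root permutation `φ ∘ σ_a ∘ φ⁻¹` again lies in `S`. -/
noncomputable def FullySymmetric {k : ℕ} (S : Set (Equiv.Perm (Word k))) : Prop :=
  ∀ a ∈ S, a ≠ 1 → ∀ φ : Equiv.Perm (Fin k), ∀ b : Equiv.Perm (Word k),
    IsHanoiWith b (φ '' inactivePegs a) →
    rootPerm b = φ * rootPerm a * φ⁻¹ → b ∈ S

/-- The family `R̲_{k,n}`: the identity together with all Hanoi automorphisms
`a` such that (1) `Q_a ⊆ {m+1, …, m+n}` for some `m`, and (2) whenever
`i ∈ Q_a` the root permutation of `a` fixes `i-1, …, i-(n-1)`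
(all peg labels mod `k`). -/
noncomputable def Runder (k n : ℕ) : Set (Equiv.Perm (Word k)) :=
  {a | a = 1 ∨ (IsHanoiAut a ∧
    (∃ m : Fin k, ∀ q ∈ inactivePegs a, ∃ t : ℕ, 1 ≤ t ∧ t ≤ n ∧
      (q : ℕ) = ((m : ℕ) + t) % k) ∧
    ∀ i ∈ inactivePegs a, ∀ x : Fin k, ∀ t : ℕ, 1 ≤ t → t ≤ n - 1 →
      ((x : ℕ) + t) % k = (i : ℕ) → rootPerm a x = x)}

/-- The family `R̄_{k,n}`: the identity together with all Hanoi automorphisms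
`a` such that (1) `Q_a ⊆ {m+1, …, m+n}` for some `m`, and (2) whenever
`i ∈ Q_a` the root permutation of `a` fixes `i+1, …, i+(n-1)`
(all peg labels mod `k`). -/
noncomputable def Rover (k n : ℕ) : Set (Equiv.Perm (Word k)) :=
  {a | a = 1 ∨ (IsHanoiAut a ∧
    (∃ m : Fin k, ∀ q ∈ inactivePegs a, ∃ t : ℕ, 1 ≤ t ∧ t ≤ n ∧
      (q : ℕ) = ((m : ℕ) + t) % k) ∧
    ∀ i ∈ inactivePegs a, ∀ x : Fin k, ∀ t : ℕ, 1 ≤ t → t ≤ n - 1 →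
      (x : ℕ) = ((i : ℕ) + t) % k → rootPerm a x = x)}

/-- The finite word `x_m … x_1` (first letter `x_m`) read off from a
left-infinite sequence `… x_2 x_1`, encoded as `x : ℕ → Fin k` with
`x s = x_{s+1}`. -/
def wordOf {k : ℕ} (x : ℕ → Fin k) (m : ℕ) : Word k := (List.range m).reverse.map x

section AuxProofs

variable {k : ℕ} {e a b : Equiv.Perm (Word k)}

/-- the root letter function -/
def hd (e : Equiv.Perm (Word k)) (x : Fin k) : Fin k := (e [x]).head?.getD x

lemma IsTreeAut.one : IsTreeAut (1 : Equiv.Perm (Word k)) :=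
  ⟨fun _ => rfl, fun _ _ _ h => h⟩

lemma IsTreeAut.mul (ha : IsTreeAut a) (hb : IsTreeAut b) : IsTreeAut (a * b) := by
  refine ⟨fun w => ?_, fun w v n h => ?_⟩
  · simp only [Equiv.Perm.mul_apply, ha.1, hb.1]
  · simp only [Equiv.Perm.mul_apply]
    exact ha.2 _ _ _ (hb.2 _ _ _ h)

lemma IsTreeAut.apply_nil (h : IsTreeAut e) : e [] = [] :=
  List.length_eq_zero_iff.mp (h.1 [])

lemma IsTreeAut.single (h : IsTreeAut e) (x : Fin k) : e [x] = [hd e x] := by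
  have h1 : (e [x]).length = 1 := h.1 [x]
  cases hx : e [x] with
  | nil => simp [hx] at h1
  | cons y t =>
    cases t with
    | nil => simp [hd, hx]
    | cons z u => simp [hx] at h1

lemma IsTreeAut.cons_eq (h : IsTreeAut e) (x : Fin k) (w : Word k) :
    e (x :: w) = hd e x :: (e (x :: w)).tail := by
  have hl : (e (x :: w)).length = w.length + 1 := h.1 (x :: w)
  have ht : (e (x :: w)).take 1 = (e [x]).take 1 := h.2 (x :: w) [x] 1 rfl
  cases hx : e (x :: w) with
  | nil => simp [hx] at hl
  | cons y t =>
    rw [hx] at ht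
    rw [h.single x] at ht
    simp at ht
    simp [ht]

lemma IsTreeAut.hd_inj (h : IsTreeAut e) {x y : Fin k}
    (hxy : hd e x = hd e y) : x = y := by
  have : e [x] = e [y] := by rw [h.single x, h.single y, hxy]
  simpa using e.injective this

lemma rootPerm_apply (h : IsTreeAut e) (x : Fin k) :
    rootPerm e x = hd e x := by
  have hbij : Function.Bijective (fun x : Fin k => ((e [x]).head?.getD x)) := by
    rw [← Finite.injective_iff_bijective]
    intro x y hxy
    exact h.hd_inj hxy
  rw [rootPerm, dif_pos hbij]
  rfl

lemma sec_apply (h : IsTreeAut e) (x : Fin k) (w : Word k) :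
    sec e x w = (e (x :: w)).tail := by
  have hinj : Function.Injective (fun w : Word k => (e (x :: w)).tail) := by
    intro w v hwv
    have : e (x :: w) = e (x :: v) := by
      rw [h.cons_eq x w, h.cons_eq x v]
      simp only at hwv
      rw [hwv]
    simpa using e.injective this
  have hsurj : Function.Surjective (fun w : Word k => (e (x :: w)).tail) := by
    intro u
    set z := e.symm (hd e x :: u) with hz
    have hez : e z = hd e x :: u := e.apply_symm_apply _
    have hlz : z.length = u.length + 1 := by
      have h1 : (e z).length = z.length := h.1 z
      rw [hez] at h1
      simpa using h1.symm
    cases hzc : z with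
    | nil => simp [hzc] at hlz
    | cons y z' =>
      have hezc : e (y :: z') = hd e x :: u := by rw [← hzc, hez]
      have hy : hd e y = hd e x := by
        have h2 := h.cons_eq y z'
        rw [hezc] at h2
        simpa using h2.symm
      have hyx : y = x := h.hd_inj hy
      subst hyx
      exact ⟨z', by simp [hezc]⟩
  rw [sec, dif_pos ⟨hinj, hsurj⟩]
  rfl

lemma cons_apply (h : IsTreeAut e) (x : Fin k) (w : Word k) :
    e (x :: w) = rootPerm e x :: sec e x w := by
  rw [rootPerm_apply h, sec_apply h]
  exact h.cons_eq x w

lemma IsTreeAut.sec (h : IsTreeAut e) (x : Fin k) : IsTreeAut (Hanoi.sec e x) := by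
  constructor
  · intro w
    rw [sec_apply h]
    have h2 := h.1 (x :: w)
    rw [List.length_tail, h2]
    simp
  · intro w v n hwv
    rw [sec_apply h, sec_apply h]
    have h1 : (e (x :: w)).take (n+1) = (e (x :: v)).take (n+1) := by
      apply h.2
      simpa using hwv
    rw [h.cons_eq x w, h.cons_eq x v] at h1
    simpa using h1

lemma rootPerm_one : rootPerm (1 : Equiv.Perm (Word k)) = 1 := by
  ext x
  rw [rootPerm_apply IsTreeAut.one x]
  rfl

lemma sec_one (x : Fin k) : sec (1 : Equiv.Perm (Word k)) x = 1 := by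
  ext w
  rw [sec_apply IsTreeAut.one x w]
  rfl

lemma single_eq (h : IsTreeAut e) (x : Fin k) : e [x] = [rootPerm e x] := by
  rw [rootPerm_apply h]; exact h.single x

lemma rootPerm_mul (ha : IsTreeAut a) (hb : IsTreeAut b) :
    rootPerm (a * b) = rootPerm a * rootPerm b := by
  ext x
  have h2 : (a * b) [x] = [rootPerm a (rootPerm b x)] := by
    rw [Equiv.Perm.mul_apply, single_eq hb, single_eq ha]
  have h3 := single_eq (ha.mul hb) x
  rw [h2] at h3
  have : rootPerm a (rootPerm b x) = rootPerm (a * b) x := by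
    simpa using h3
  rw [← this]
  rfl

lemma sec_mul (ha : IsTreeAut a) (hb : IsTreeAut b) (x : Fin k) :
    sec (a * b) x = sec a (rootPerm b x) * sec b x := by
  ext w
  have h2 : (a * b) (x :: w) =
      rootPerm a (rootPerm b x) :: sec a (rootPerm b x) (sec b x w) := by
    rw [Equiv.Perm.mul_apply, cons_apply hb, cons_apply ha]
  have h3 := cons_apply (ha.mul hb) x (w := w)
  rw [h2] at h3
  have := (List.cons.injEq _ _ _ _ ▸ h3.symm).2
  rw [this]
  rfl

/-- backward prefix preservation -/
lemma take_eq_of_apply_take_eq :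
    ∀ (n : ℕ) {k : ℕ} (e : Equiv.Perm (Word k)), IsTreeAut e → ∀ (w v : Word k),
      (e w).take n = (e v).take n → w.take n = v.take n := by
  intro n
  induction n with
  | zero => intro k e _ w v _; simp
  | succ n ih =>
    intro k e he w v hwv
    cases w with
    | nil =>
      cases v with
      | nil => rfl
      | cons y v' =>
        rw [he.apply_nil, cons_apply he] at hwv
        simp at hwv
    | cons x w' =>
      cases v with
      | nil =>
        rw [he.apply_nil, cons_apply he] at hwv
        simp at hwv
      | cons y v' =>
        rw [cons_apply he, cons_apply he] at hwv
        simp only [List.take_succ_cons, List.cons.injEq] at hwv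
        obtain ⟨h1, h2⟩ := hwv
        have hxy : x = y := (rootPerm e).injective h1
        subst hxy
        have := ih (Hanoi.sec e x) (he.sec x) w' v' h2
        simp [this]

lemma IsTreeAut.inv (h : IsTreeAut e) : IsTreeAut e⁻¹ := by
  constructor
  · intro w
    have h2 := h.1 (e⁻¹ w)
    rw [show e (e⁻¹ w) = w from (Equiv.eq_symm_apply e).mp rfl] at h2
    exact h2.symm
  · intro w v n hwv
    apply take_eq_of_apply_take_eq n e h
    simpa using hwv

lemma IsTreeAut.listProd {L : List (Equiv.Perm (Word k))}
    (h : ∀ s ∈ L, IsTreeAut s) : IsTreeAut L.prod := by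
  induction L with
  | nil => exact IsTreeAut.one
  | cons s T ih =>
    rw [List.prod_cons]
    exact (h s (by simp)).mul (ih fun t ht => h t (by simp [ht]))



section HanoiLemmas

variable {k : ℕ} {a b : Equiv.Perm (Word k)} {Q : Set (Fin k)}

lemma IsHanoiWith.one : IsHanoiWith (1 : Equiv.Perm (Word k)) Set.univ :=
  ⟨IsTreeAut.one, fun i hi => absurd (Set.mem_univ i) hi, fun j _ => sec_one j,
    fun j _ => by rw [rootPerm_one]; rfl⟩

lemma inactivePegs_one : inactivePegs (1 : Equiv.Perm (Word k)) = Set.univ := by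
  rw [inactivePegs, if_pos rfl]

lemma IsHanoiAut.spec (h : IsHanoiAut a) : IsHanoiWith a (inactivePegs a) := by
  by_cases h1 : a = 1
  · subst h1; rw [inactivePegs_one]; exact IsHanoiWith.one
  · have h' : ∃ Q, IsHanoiWith a Q := h
    rw [inactivePegs, if_neg h1, dif_pos h']
    exact h'.choose_spec

lemma IsHanoiWith.inactivePegs_eq (hw : IsHanoiWith a Q) (h1 : a ≠ 1) :
    inactivePegs a = Q := by
  have hw' : IsHanoiWith a (inactivePegs a) := IsHanoiAut.spec ⟨Q, hw⟩
  ext x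
  constructor
  · intro hx
    by_contra hxQ
    exact h1 (by rw [← hw'.2.2.1 x hx, hw.2.1 x hxQ])
  · intro hx
    by_contra hxQ
    exact h1 (by rw [← hw.2.2.1 x hx, hw'.2.1 x hxQ])

lemma rootPerm_inv (ha : IsTreeAut a) : rootPerm a⁻¹ = (rootPerm a)⁻¹ := by
  have h1 : rootPerm (a⁻¹ * a) = rootPerm a⁻¹ * rootPerm a := rootPerm_mul ha.inv ha
  rw [inv_mul_cancel, rootPerm_one] at h1
  exact eq_inv_of_mul_eq_one_left h1.symm

lemma IsHanoiWith.inv (hw : IsHanoiWith a Q) : IsHanoiWith a⁻¹ Q := by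
  have ta := hw.1
  have hrp : rootPerm a⁻¹ = (rootPerm a)⁻¹ := rootPerm_inv ta
  refine ⟨ta.inv, ?_, ?_, ?_⟩
  · intro i hi
    have hy : (rootPerm a)⁻¹ i ∉ Q := by
      intro hmem
      have h2 := hw.2.2.2 _ hmem
      rw [show rootPerm a ((rootPerm a)⁻¹ i) = i from (Equiv.eq_symm_apply _).mp rfl] at h2
      rw [← h2] at hmem
      exact hi hmem
    have h1 : sec (a⁻¹ * a) ((rootPerm a)⁻¹ i) = 1 := by rw [inv_mul_cancel, sec_one]
    rw [sec_mul ta.inv ta, hw.2.1 _ hy, mul_one, show rootPerm a ((rootPerm a)⁻¹ i) = i from (Equiv.eq_symm_apply _).mp rfl] at h1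
    exact h1
  · intro j hj
    have h1 : sec (a⁻¹ * a) j = 1 := by rw [inv_mul_cancel, sec_one]
    rw [sec_mul ta.inv ta, hw.2.2.2 _ hj, hw.2.2.1 _ hj] at h1
    exact eq_inv_of_mul_eq_one_left h1
  · intro j hj
    rw [hrp]
    have h2 := hw.2.2.2 _ hj
    calc (rootPerm a)⁻¹ j = (rootPerm a)⁻¹ (rootPerm a j) := by rw [h2]
    _ = j := Equiv.Perm.inv_eq_iff_eq.mpr rfl

lemma IsHanoiWith.ext (hwa : IsHanoiWith a Q) (hwb : IsHanoiWith b Q)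
    (hσ : rootPerm a = rootPerm b) : a = b := by
  apply Equiv.ext
  intro w
  induction w with
  | nil => rw [hwa.1.apply_nil, hwb.1.apply_nil]
  | cons x w ih =>
    rw [cons_apply hwa.1, cons_apply hwb.1, hσ]
    by_cases hx : x ∈ Q
    · rw [hwa.2.2.1 x hx, hwb.2.2.1 x hx, ih]
    · rw [hwa.2.1 x hx, hwb.2.1 x hx]

lemma finite_of_hanoi {P : Set (Equiv.Perm (Word k))}
    (h : ∀ a ∈ P, IsHanoiWith a (inactivePegs a)) : P.Finite := by
  have : Finite (Equiv.Perm (Fin k) × Set (Fin k)) := by infer_instance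
  apply Set.Finite.of_finite_image (f := fun a => (rootPerm a, inactivePegs a))
    (Set.toFinite _)
  intro x hx y hy hxy
  simp only [Prod.mk.injEq] at hxy
  exact IsHanoiWith.ext (h x hx) (hxy.2 ▸ h y hy) hxy.1

end HanoiLemmas

section ProdLemmas

variable {k : ℕ} {L : List (Equiv.Perm (Word k))} {x : Fin k} {I : Set (Fin k)}

lemma treeAut_of_hw (hL : ∀ s ∈ L, IsHanoiWith s (inactivePegs s)) :
    IsTreeAut L.prod :=
  IsTreeAut.listProd fun s hs => (hL s hs).1

lemma rootPerm_fix_not_mem {σ : Equiv.Perm (Fin k)}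
    (hfix : ∀ y ∈ I, σ y = y) (hx : x ∉ I) : σ x ∉ I := by
  intro hmem
  have h1 : σ (σ x) = σ x := hfix _ hmem
  have h2 : σ x = x := σ.injective h1
  rw [h2] at hmem
  exact hx hmem

lemma rootPerm_listProd_stable
    (hT : ∀ s ∈ L, IsTreeAut s)
    (hfix : ∀ s ∈ L, ∀ y ∈ I, rootPerm s y = y)
    (hx : x ∉ I) : rootPerm L.prod x ∉ I := by
  induction L with
  | nil => rw [List.prod_nil, rootPerm_one]; exact hx
  | cons s T ih =>
    rw [List.prod_cons, rootPerm_mul (hT s (by simp)) (IsTreeAut.listProd fun t ht => hT t (by simp [ht]))]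
    have h1 : rootPerm T.prod x ∉ I := ih (fun t ht => hT t (by simp [ht]))
      (fun t ht => hfix t (by simp [ht]))
    simp only [Equiv.Perm.mul_apply]
    exact rootPerm_fix_not_mem (hfix s (by simp)) h1

lemma rootPerm_listProd_fix
    (hT : ∀ s ∈ L, IsTreeAut s)
    (hfix : ∀ s ∈ L, rootPerm s x = x) : rootPerm L.prod x = x := by
  induction L with
  | nil => rw [List.prod_nil, rootPerm_one]; rfl
  | cons s T ih =>
    rw [List.prod_cons, rootPerm_mul (hT s (by simp)) (IsTreeAut.listProd fun t ht => hT t (by simp [ht]))]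
    have h1 : rootPerm T.prod x = x := ih (fun t ht => hT t (by simp [ht]))
      (fun t ht => hfix t (by simp [ht]))
    simp only [Equiv.Perm.mul_apply, h1]
    exact hfix s (by simp)

/-- sections at letters avoiding a pointwise-fixed set delete all generators
whose inactive set is inside that set -/
lemma sec_listProd_avoid
    (hL : ∀ s ∈ L, IsHanoiWith s (inactivePegs s))
    (hfix : ∀ s ∈ L, ∀ y ∈ I, rootPerm s y = y)
    (hx : x ∉ I) :
    ∃ M : List (Equiv.Perm (Word k)), List.Sublist M L ∧ sec L.prod x = M.prod ∧
      ∀ s ∈ M, ¬ (inactivePegs s ⊆ I) := by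
  induction L with
  | nil => exact ⟨[], List.Sublist.refl _, by rw [List.prod_nil, sec_one], by simp⟩
  | cons s T ih =>
    have hTw : ∀ t ∈ T, IsHanoiWith t (inactivePegs t) := fun t ht => hL t (by simp [ht])
    have hTfix : ∀ t ∈ T, ∀ y ∈ I, rootPerm t y = y := fun t ht => hfix t (by simp [ht])
    obtain ⟨M, hsub, hsec, hmiss⟩ := ih hTw hTfix
    have hsw := hL s (by simp)
    have hTa : IsTreeAut T.prod := treeAut_of_hw hTw
    have hy : rootPerm T.prod x ∉ I :=
      rootPerm_listProd_stable (fun t ht => (hTw t ht).1) hTfix hx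
    rw [List.prod_cons, sec_mul hsw.1 hTa, hsec]
    by_cases hyQ : rootPerm T.prod x ∈ inactivePegs s
    · refine ⟨s :: M, hsub.cons_cons s, ?_, ?_⟩
      · rw [hsw.2.2.1 _ hyQ, List.prod_cons]
      · intro t ht
        rcases List.mem_cons.mp ht with h | h
        · subst h; intro hQI; exact hy (hQI hyQ)
        · exact hmiss t h
    · refine ⟨M, hsub.cons s, ?_, hmiss⟩
      rw [hsw.2.1 _ hyQ, one_mul]

/-- sections at letters fixed by all root permutations keep exactly the
generators whose inactive set contains the letter -/
lemma sec_listProd_frozen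
    (hL : ∀ s ∈ L, IsHanoiWith s (inactivePegs s))
    (hfreeze : ∀ s ∈ L, rootPerm s x = x) :
    ∃ M : List (Equiv.Perm (Word k)), List.Sublist M L ∧ sec L.prod x = M.prod ∧
      (∀ s ∈ M, x ∈ inactivePegs s) ∧
      ((∀ s ∈ L, x ∈ inactivePegs s) → M = L) := by
  induction L with
  | nil => exact ⟨[], List.Sublist.refl _, by rw [List.prod_nil, sec_one], by simp, fun _ => rfl⟩
  | cons s T ih =>
    have hTw : ∀ t ∈ T, IsHanoiWith t (inactivePegs t) := fun t ht => hL t (by simp [ht])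
    have hTfr : ∀ t ∈ T, rootPerm t x = x := fun t ht => hfreeze t (by simp [ht])
    obtain ⟨M, hsub, hsec, hmem, hall⟩ := ih hTw hTfr
    have hsw := hL s (by simp)
    have hTa : IsTreeAut T.prod := treeAut_of_hw hTw
    have hyx : rootPerm T.prod x = x :=
      rootPerm_listProd_fix (fun t ht => (hTw t ht).1) hTfr
    rw [List.prod_cons, sec_mul hsw.1 hTa, hsec, hyx]
    by_cases hxQ : x ∈ inactivePegs s
    · refine ⟨s :: M, hsub.cons_cons s, by rw [hsw.2.2.1 _ hxQ, List.prod_cons], ?_, ?_⟩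
      · intro t ht
        rcases List.mem_cons.mp ht with h | h
        · subst h; exact hxQ
        · exact hmem t h
      · intro hallL
        rw [hall fun t ht => hallL t (by simp [ht])]
    · refine ⟨M, hsub.cons s, by rw [hsw.2.1 _ hxQ, one_mul], hmem, ?_⟩
      intro hallL
      exact absurd (hallL s (by simp)) hxQ

lemma sec_listProd_all
    (hL : ∀ s ∈ L, IsHanoiWith s (inactivePegs s))
    (hall : ∀ s ∈ L, x ∈ inactivePegs s) :
    sec L.prod x = L.prod := by
  obtain ⟨M, _, hsec, _, hM⟩ := sec_listProd_frozen hL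
    (fun s hs => (hL s hs).2.2.2 x (hall s hs))
  rw [hsec, hM hall]

/-- strict length decrease when some generator misses the letter -/
lemma sec_listProd_short
    (hL : ∀ s ∈ L, IsHanoiWith s (inactivePegs s))
    (hmiss : ∃ s ∈ L, x ∉ inactivePegs s) :
    ∃ M : List (Equiv.Perm (Word k)), List.Sublist M L ∧ sec L.prod x = M.prod ∧ M.length < L.length := by
  induction L with
  | nil => simp at hmiss
  | cons s T ih =>
    have hTw : ∀ t ∈ T, IsHanoiWith t (inactivePegs t) := fun t ht => hL t (by simp [ht])
    have hsw := hL s (by simp)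
    have hTa : IsTreeAut T.prod := treeAut_of_hw hTw
    rw [List.prod_cons, sec_mul hsw.1 hTa]
    by_cases hTall : ∀ t ∈ T, x ∈ inactivePegs t
    · have hyx : rootPerm T.prod x = x :=
        rootPerm_listProd_fix (fun t ht => (hTw t ht).1)
          (fun t ht => (hTw t ht).2.2.2 x (hTall t ht))
      have hxs : x ∉ inactivePegs s := by
        rcases hmiss with ⟨t, htmem, htx⟩
        rcases List.mem_cons.mp htmem with h | h
        · subst h; exact htx
        · exact absurd (hTall t h) htx
      rw [hyx, hsw.2.1 _ hxs, one_mul, sec_listProd_all hTw hTall]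
      exact ⟨T, (List.Sublist.refl T).cons s, rfl, by simp⟩
    · push_neg at hTall
      obtain ⟨M, hsub, hsec, hlen⟩ := ih hTw hTall
      rw [hsec]
      by_cases hyQ : rootPerm T.prod x ∈ inactivePegs s
      · exact ⟨s :: M, hsub.cons_cons s, by rw [hsw.2.2.1 _ hyQ, List.prod_cons],
          by simpa using hlen⟩
      · exact ⟨M, hsub.cons s, by rw [hsw.2.1 _ hyQ, one_mul],
          Nat.lt_succ_of_lt hlen⟩

lemma sec_listProd_sub
    (hL : ∀ s ∈ L, IsHanoiWith s (inactivePegs s)) (x : Fin k) :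
    ∃ M : List (Equiv.Perm (Word k)), List.Sublist M L ∧ sec L.prod x = M.prod := by
  obtain ⟨M, hsub, hsec, _⟩ := sec_listProd_avoid (I := ∅) hL (by simp) (by simp)
  exact ⟨M, hsub, hsec⟩

lemma secW_listProd
    (hL : ∀ s ∈ L, IsHanoiWith s (inactivePegs s)) (v : Word k) :
    ∃ M : List (Equiv.Perm (Word k)), (∀ s ∈ M, s ∈ L) ∧ secW L.prod v = M.prod := by
  induction v generalizing L with
  | nil => exact ⟨L, fun s hs => hs, rfl⟩
  | cons x v ih =>
    obtain ⟨M₁, hsub, hsec⟩ := sec_listProd_sub hL x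
    have hM₁ : ∀ s ∈ M₁, IsHanoiWith s (inactivePegs s) :=
      fun s hs => hL s (hsub.mem hs)
    obtain ⟨M₂, hmem, hsec₂⟩ := ih hM₁
    refine ⟨M₂, fun s hs => hsub.mem (hmem s hs), ?_⟩
    show secW (sec L.prod x) v = M₂.prod
    rw [hsec, hsec₂]

end ProdLemmas

section Finiteness

variable {k : ℕ} [NeZero k]

open Fin.NatCast Fin.CommRing

lemma val_add_natCast (m : Fin k) (t : ℕ) :
    ((m + (t : Fin k) : Fin k) : ℕ) = ((m : ℕ) + t) % k := by
  rw [Fin.val_add, Fin.val_natCast]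
  conv_rhs => rw [Nat.add_mod]
  rw [Nat.mod_eq_of_lt m.isLt]

lemma fin_val_eq_iff {q m : Fin k} {t : ℕ} :
    (q : ℕ) = ((m : ℕ) + t) % k ↔ q = m + (t : Fin k) := by
  rw [Fin.ext_iff, val_add_natCast]

/-- The generators with `j` inactive, from the family `R̄_{k,n}`. -/
def GenJ (n : ℕ) (j : Fin k) : Set (Equiv.Perm (Word k)) :=
  {a | IsHanoiWith a (inactivePegs a) ∧ j ∈ inactivePegs a ∧
    (∃ m : Fin k, ∀ q ∈ inactivePegs a, ∃ t : ℕ, 1 ≤ t ∧ t ≤ n ∧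
      (q : ℕ) = ((m : ℕ) + t) % k) ∧
    ∀ i ∈ inactivePegs a, ∀ x : Fin k, ∀ t : ℕ, 1 ≤ t → t ≤ n - 1 →
      (x : ℕ) = ((i : ℕ) + t) % k → rootPerm a x = x}

/-- the offsets decomposition -/
lemma genJ_off {n : ℕ} {j : Fin k} {a : Equiv.Perm (Word k)} (ha : a ∈ GenJ n j) :
    ∀ q ∈ inactivePegs a, (∃ u : ℕ, u ≤ n - 1 ∧ q = j - (u : Fin k)) ∨
      (∃ d : ℕ, 1 ≤ d ∧ d ≤ n - 1 ∧ q = j + (d : Fin k)) := by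
  intro q hq
  obtain ⟨m, hm⟩ := ha.2.2.1
  obtain ⟨tq, htq1, htqn, htq⟩ := hm q hq
  obtain ⟨tj, htj1, htjn, htj⟩ := hm j ha.2.1
  rw [fin_val_eq_iff] at htq htj
  by_cases hle : tq ≤ tj
  · left
    refine ⟨tj - tq, by omega, ?_⟩
    rw [htq, htj]
    have : ((tj - tq : ℕ) : Fin k) = (tj : Fin k) - (tq : Fin k) := Nat.cast_sub hle
    rw [this]
    ring
  · right
    refine ⟨tq - tj, by omega, by omega, ?_⟩
    rw [htq, htj]
    have : ((tq - tj : ℕ) : Fin k) = (tq : Fin k) - (tj : Fin k) := Nat.cast_sub (by omega)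
    rw [this]
    ring

/-- interval around `j`, backward reach `b`, forward reach `n - 1`. -/
def ISet (n : ℕ) (j : Fin k) (b : ℕ) : Set (Fin k) :=
  {x | (∃ u : ℕ, u ≤ b ∧ x = j - (u : Fin k)) ∨
    (∃ d : ℕ, 1 ≤ d ∧ d ≤ n - 1 ∧ x = j + (d : Fin k))}

lemma ISet_mono {n : ℕ} {j : Fin k} {b b' : ℕ} (h : b ≤ b') :
    ISet n j b ⊆ ISet n j b' := by
  rintro x (⟨u, hu, hx⟩ | hf)
  · exact Or.inl ⟨u, le_trans hu h, hx⟩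
  · exact Or.inr hf

/-- backward reach of a generator -/
noncomputable def back (n : ℕ) (j : Fin k) (a : Equiv.Perm (Word k)) : ℕ :=
  sSup {u | u ≤ n - 1 ∧ j - (u : Fin k) ∈ inactivePegs a}

lemma back_spec {n : ℕ} {j : Fin k} {a : Equiv.Perm (Word k)} (ha : a ∈ GenJ n j) :
    back n j a ≤ n - 1 ∧ j - ((back n j a : ℕ) : Fin k) ∈ inactivePegs a := by
  have hne : {u | u ≤ n - 1 ∧ j - (u : Fin k) ∈ inactivePegs a}.Nonempty := by
    refine ⟨0, Nat.zero_le _, ?_⟩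
    simpa using ha.2.1
  have hbdd : BddAbove {u | u ≤ n - 1 ∧ j - (u : Fin k) ∈ inactivePegs a} :=
    ⟨n - 1, fun u hu => hu.1⟩
  exact Nat.sSup_mem hne hbdd

lemma le_back {n : ℕ} {j : Fin k} {a : Equiv.Perm (Word k)} {u : ℕ}
    (hu : u ≤ n - 1) (hmem : j - (u : Fin k) ∈ inactivePegs a) : u ≤ back n j a :=
  le_csSup ⟨n - 1, fun v hv => hv.1⟩ ⟨hu, hmem⟩

/-- the root permutation of a generator fixes its interval pointwise -/
lemma genJ_fix_ISet {n : ℕ} {j : Fin k} {a : Equiv.Perm (Word k)} (ha : a ∈ GenJ n j) :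
    ∀ x ∈ ISet n j (back n j a), rootPerm a x = x := by
  obtain ⟨hble, hbmem⟩ := back_spec ha
  rintro x (⟨u, hu, hx⟩ | ⟨d, hd1, hdn, hx⟩)
  · by_cases hub : u = back n j a
    · subst hub
      rw [hx]
      exact ha.1.2.2.2 _ hbmem
    · have hult : u < back n j a := lt_of_le_of_ne hu hub
      have ht1 : 1 ≤ back n j a - u := by omega
      have htn : back n j a - u ≤ n - 1 := by omega
      refine ha.2.2.2 _ hbmem x (back n j a - u) ht1 htn ?_
      rw [fin_val_eq_iff, hx]
      have : ((back n j a - u : ℕ) : Fin k) =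
          ((back n j a : ℕ) : Fin k) - (u : Fin k) := Nat.cast_sub (by omega)
      rw [this]
      ring
  · refine ha.2.2.2 j ha.2.1 x d hd1 hdn ?_
    rw [fin_val_eq_iff, hx]

/-- the inactive pegs of a generator lie in its interval -/
lemma genJ_pegs_subset {n : ℕ} {j : Fin k} {a : Equiv.Perm (Word k)} (ha : a ∈ GenJ n j) :
    inactivePegs a ⊆ ISet n j (back n j a) := by
  intro q hq
  rcases genJ_off ha q hq with ⟨u, hu, hq'⟩ | ⟨d, hd1, hdn, hq'⟩
  · exact Or.inl ⟨u, le_back hu (hq' ▸ hq), hq'⟩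
  · exact Or.inr ⟨d, hd1, hdn, hq'⟩

/-- extensionality relative to a set of self-similar letters -/
lemma treeAut_ext_rel {a b : Equiv.Perm (Word k)} (ha : IsTreeAut a) (hb : IsTreeAut b)
    (E : Set (Fin k)) (hσ : rootPerm a = rootPerm b)
    (hE : ∀ x ∈ E, sec a x = a ∧ sec b x = b)
    (hnE : ∀ x ∉ E, sec a x = sec b x) : a = b := by
  apply Equiv.ext
  intro w
  induction w with
  | nil => rw [ha.apply_nil, hb.apply_nil]
  | cons x w ih =>
    rw [cons_apply ha, cons_apply hb, hσ]
    by_cases hx : x ∈ E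
    · rw [(hE x hx).1, (hE x hx).2, ih]
    · rw [hnE x hx]

/-- Products of generators with a common inactive peg form a finite set. -/
lemma finite_prods (n : ℕ) (j : Fin k) :
    ∀ (c : ℕ) (T : Finset (Equiv.Perm (Word k))), T.card ≤ c →
      (∀ a ∈ T, a ∈ GenJ n j) →
      {g | ∃ L : List (Equiv.Perm (Word k)), (∀ s ∈ L, s ∈ T) ∧ L.prod = g}.Finite := by
  intro c
  induction c with
  | zero =>
    intro T hc _
    have hT : T = ∅ := Finset.card_eq_zero.mp (Nat.le_zero.mp hc)
    subst hT
    apply Set.Finite.subset (Set.finite_singleton 1)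
    rintro g ⟨L, hL, hprod⟩
    cases L with
    | nil => simp [← hprod]
    | cons s L' => simpa using hL s (by simp)
  | succ c ih =>
    intro T hc hT
    classical
    rcases Finset.eq_empty_or_nonempty T with hTe | hTne
    · subst hTe
      apply Set.Finite.subset (Set.finite_singleton 1)
      rintro g ⟨L, hL, hprod⟩
      cases L with
      | nil => simp [← hprod]
      | cons s L' => simpa using hL s (by simp)
    obtain ⟨sm, hsmT, hsmmin⟩ := Finset.exists_min_image T (back n j) hTne
    set I := ISet n j (back n j sm) with hI
    have hfixI : ∀ t ∈ T, ∀ y ∈ I, rootPerm t y = y := by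
      intro t ht y hy
      exact genJ_fix_ISet (hT t ht) y (ISet_mono (hsmmin t ht) hy)
    have hQsm : inactivePegs sm ⊆ I := genJ_pegs_subset (hT sm hsmT)
    set E := {x : Fin k | ∀ t ∈ T, x ∈ inactivePegs t} with hE
    set F := ⋃ t ∈ T, {g | ∃ L : List (Equiv.Perm (Word k)),
      (∀ s ∈ L, s ∈ T.erase t) ∧ L.prod = g} with hF
    have hFfin : F.Finite := by
      apply Set.Finite.biUnion T.finite_toSet
      intro t ht
      apply ih (T.erase t)
      · have := Finset.card_erase_of_mem ht
        omega
      · intro a haT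
        exact hT a (Finset.mem_of_mem_erase haT)
    set Φ : Equiv.Perm (Word k) → Equiv.Perm (Fin k) × (Fin k → Equiv.Perm (Word k)) :=
      fun g => (rootPerm g, fun x => if x ∈ E then 1 else sec g x) with hΦ
    have himg : ∀ g ∈ {g | ∃ L : List (Equiv.Perm (Word k)),
        (∀ s ∈ L, s ∈ T) ∧ L.prod = g}, ∀ x : Fin k,
        (if x ∈ E then (1 : Equiv.Perm (Word k)) else sec g x) ∈ F ∪ {1} := by
      rintro g ⟨L, hL, rfl⟩ x
      by_cases hx : x ∈ E
      · rw [if_pos hx]; exact Or.inr rfl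
      · rw [if_neg hx]
        left
        have hLw : ∀ s ∈ L, IsHanoiWith s (inactivePegs s) :=
          fun s hs => (hT s (hL s hs)).1
        simp only [hE, Set.mem_setOf_eq, not_forall] at hx
        obtain ⟨t₀, ht₀T, ht₀x⟩ := hx
        by_cases hxI : x ∈ I
        · -- frozen letter; every generator not containing x is deleted
          obtain ⟨M, hsub, hsec, hmemM, _⟩ := sec_listProd_frozen hLw
            (fun s hs => hfixI s (hL s hs) x hxI)
          refine Set.mem_biUnion ht₀T ⟨M, ?_, hsec.symm⟩
          intro s hs
          refine Finset.mem_erase.mpr ⟨?_, hL s (hsub.mem hs)⟩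
          intro hst₀
          exact ht₀x (hst₀ ▸ hmemM s hs)
        · -- moving letter outside the interval; `sm` is deleted
          obtain ⟨M, hsub, hsec, hmemM⟩ := sec_listProd_avoid hLw
            (fun s hs => hfixI s (hL s hs)) hxI
          refine Set.mem_biUnion hsmT ⟨M, ?_, hsec.symm⟩
          intro s hs
          refine Finset.mem_erase.mpr ⟨?_, hL s (hsub.mem hs)⟩
          intro hssm
          exact hmemM s hs (hssm ▸ hQsm)
    have hinj : Set.InjOn Φ {g | ∃ L : List (Equiv.Perm (Word k)),
        (∀ s ∈ L, s ∈ T) ∧ L.prod = g} := by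
      rintro g ⟨Lg, hLg, rfl⟩ h ⟨Lh, hLh, rfl⟩ hgh
      have hLgw : ∀ s ∈ Lg, IsHanoiWith s (inactivePegs s) :=
        fun s hs => (hT s (hLg s hs)).1
      have hLhw : ∀ s ∈ Lh, IsHanoiWith s (inactivePegs s) :=
        fun s hs => (hT s (hLh s hs)).1
      simp only [hΦ, Prod.mk.injEq] at hgh
      apply treeAut_ext_rel (treeAut_of_hw hLgw) (treeAut_of_hw hLhw) E hgh.1
      · intro x hx
        constructor
        · exact sec_listProd_all hLgw fun s hs => hx s (hLg s hs)
        · exact sec_listProd_all hLhw fun s hs => hx s (hLh s hs)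
      · intro x hx
        have := congrFun hgh.2 x
        rwa [if_neg hx, if_neg hx] at this
    apply Set.Finite.of_finite_image _ hinj
    have hbig : ((Set.univ : Set (Equiv.Perm (Fin k))) ×ˢ
        (Set.univ.pi fun _ : Fin k => F ∪ {1})).Finite :=
      Set.Finite.prod Set.finite_univ
        (Set.Finite.pi fun _ => hFfin.union (Set.finite_singleton 1))
    apply hbig.subset
    rintro p ⟨g, hg, rfl⟩
    refine ⟨Set.mem_univ _, ?_⟩
    rw [Set.mem_univ_pi]
    intro x
    exact himg g hg x

end Finiteness

section Assembly

variable {k : ℕ}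

lemma secW_one : ∀ v : Word k, secW (1 : Equiv.Perm (Word k)) v = 1 := by
  intro v
  induction v with
  | nil => rfl
  | cons x v ih =>
    show secW (sec 1 x) v = 1
    rw [sec_one]
    exact ih

lemma exists_rep {S : Set (Equiv.Perm (Word k))} {g : Equiv.Perm (Word k)}
    (hg : g ∈ Subgroup.closure S) : ∃ L, IsRepOf S L g := by
  rw [← Subgroup.mem_toSubmonoid, Subgroup.closure_toSubmonoid] at hg
  obtain ⟨L, h1, h2⟩ := Submonoid.exists_list_of_mem_closure hg
  exact ⟨L, fun x hx => by simpa using h1 x hx, h2⟩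

lemma rep_mem_closure {S : Set (Equiv.Perm (Word k))} {L : List (Equiv.Perm (Word k))}
    (hL : ∀ s ∈ L, s ∈ S ∨ s⁻¹ ∈ S) : L.prod ∈ Subgroup.closure S := by
  apply Subgroup.list_prod_mem
  intro x hx
  rcases hL x hx with h | h
  · exact Subgroup.subset_closure h
  · rw [← inv_inv x]
    exact Subgroup.inv_mem _ (Subgroup.subset_closure h)

open Classical in
lemma prod_filter_ne_one (L : List (Equiv.Perm (Word k))) :
    (L.filter (fun s => s ≠ 1)).prod = L.prod := by
  induction L with
  | nil => rfl
  | cons s T ih =>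
    rw [List.filter_cons]
    by_cases hs : s = 1
    · rw [if_neg (by simp [hs]), ih, List.prod_cons, hs, one_mul]
    · rw [if_pos (by simp [hs]), List.prod_cons, List.prod_cons, ih]

/-- any letter of a representation is a Hanoi automorphism (with its
inactive-peg set) provided `S ⊆ Rover k n` -/
lemma letters_hw {n : ℕ} {S : Set (Equiv.Perm (Word k))} (hS : S ⊆ Rover k n)
    {s : Equiv.Perm (Word k)} (hs : s ∈ S ∨ s⁻¹ ∈ S) :
    IsHanoiWith s (inactivePegs s) := by
  rcases hs with h | h
  · rcases hS h with h1 | ⟨hHan, _⟩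
    · subst h1
      rw [inactivePegs_one]
      exact IsHanoiWith.one
    · exact IsHanoiAut.spec hHan
  · rcases hS h with h1 | ⟨hHan, _⟩
    · have : s = 1 := by
        rw [← inv_inv s, h1]; simp
      subst this
      rw [inactivePegs_one]
      exact IsHanoiWith.one
    · by_cases hs1 : s = 1
      · subst hs1; rw [inactivePegs_one]; exact IsHanoiWith.one
      · have hw : IsHanoiWith s⁻¹ (inactivePegs s⁻¹) := IsHanoiAut.spec hHan
        have hw2 : IsHanoiWith s (inactivePegs s⁻¹) := by
          have := hw.inv
          rwa [inv_inv] at this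
        rwa [hw2.inactivePegs_eq hs1]

/-- a nontrivial letter of a representation with `j` inactive lies in `GenJ n j` -/
lemma letters_genJ [NeZero k] {n : ℕ} {S : Set (Equiv.Perm (Word k))} (hS : S ⊆ Rover k n)
    {s : Equiv.Perm (Word k)} (hs : s ∈ S ∨ s⁻¹ ∈ S) (hs1 : s ≠ 1) {j : Fin k}
    (hj : j ∈ inactivePegs s) : s ∈ GenJ n j := by
  have hw : IsHanoiWith s (inactivePegs s) := letters_hw hS hs
  refine ⟨hw, hj, ?_⟩
  rcases hs with h | h
  · rcases hS h with h1 | ⟨_, hwin, hfix⟩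
    · exact absurd h1 hs1
    · exact ⟨hwin, hfix⟩
  · have hinv1 : s⁻¹ ≠ 1 := by
      intro hc
      exact hs1 (by rw [← inv_inv s, hc]; simp)
    rcases hS h with h1 | ⟨hHan, hwin, hfix⟩
    · exact absurd h1 hinv1
    · have hwi : IsHanoiWith s⁻¹ (inactivePegs s⁻¹) := IsHanoiAut.spec hHan
      have hQeq : inactivePegs s = inactivePegs s⁻¹ := by
        have hw2 : IsHanoiWith s (inactivePegs s⁻¹) := by
          have := hwi.inv
          rwa [inv_inv] at this
        exact hw2.inactivePegs_eq hs1
      have hrp : rootPerm s = (rootPerm s⁻¹)⁻¹ := by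
        have := rootPerm_inv hwi.1
        rw [inv_inv] at this
        rw [this]
      constructor
      · rw [hQeq]; exact hwin
      · intro i hi x t ht1 ht2 hxt
        rw [hrp]
        have hfx : rootPerm s⁻¹ x = x := hfix i (hQeq ▸ hi) x t ht1 ht2 hxt
        calc (rootPerm s⁻¹)⁻¹ x = (rootPerm s⁻¹)⁻¹ (rootPerm s⁻¹ x) := by rw [hfx]
        _ = x := Equiv.Perm.inv_eq_iff_eq.mpr rfl

theorem Rover_contracting' {k n : ℕ} (hn : 1 ≤ n) (hk : 2 * n + 1 ≤ k)
    (S : Set (Equiv.Perm (Word k))) (hS1 : (1 : Equiv.Perm (Word k)) ∈ S)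
    (hS : S ⊆ Rover k n) :
    IsContracting (Subgroup.closure S) := by
  classical
  haveI : NeZero k := ⟨by omega⟩
  -- the nucleus
  set P : Fin k → Set (Equiv.Perm (Word k)) :=
    fun j => {s | (s ∈ S ∨ s⁻¹ ∈ S) ∧ s ≠ 1 ∧ j ∈ inactivePegs s} with hP
  set N : Set (Equiv.Perm (Word k)) :=
    {1} ∪ ⋃ j : Fin k, {g | ∃ L : List (Equiv.Perm (Word k)),
      (∀ s ∈ L, s ∈ P j) ∧ L.prod = g} with hN
  have hPGen : ∀ j : Fin k, P j ⊆ GenJ n j := by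
    intro j s hs
    exact letters_genJ hS hs.1 hs.2.1 hs.2.2
  have hone_mem : (1 : Equiv.Perm (Word k)) ∈ N := Or.inl rfl
  have hNfin : N.Finite := by
    apply Set.Finite.union (Set.finite_singleton 1)
    apply Set.finite_iUnion
    intro j
    have hGfin : (GenJ n j).Finite := finite_of_hanoi (fun a ha => ha.1)
    have := finite_prods n j hGfin.toFinset.card hGfin.toFinset le_rfl
      (fun a ha => hGfin.mem_toFinset.mp ha)
    apply this.subset
    rintro g ⟨L, hL, hprod⟩
    exact ⟨L, fun s hsL => hGfin.mem_toFinset.mpr (hPGen j (hL s hsL)), hprod⟩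
  have hNsub : N ⊆ (Subgroup.closure S : Set (Equiv.Perm (Word k))) := by
    rintro g (hg | hg)
    · rw [Set.mem_singleton_iff] at hg
      subst hg
      exact Subgroup.one_mem _
    · obtain ⟨j, hj⟩ := Set.mem_iUnion.mp hg
      obtain ⟨L, hL, hprod⟩ := hj
      rw [← hprod]
      exact rep_mem_closure (fun s hsL => (hL s hsL).1)
  refine ⟨N, hNfin, hNsub, ?_⟩
  -- main induction on representation length
  suffices hmain : ∀ (c : ℕ) (g : Equiv.Perm (Word k)), g ∈ Subgroup.closure S →
      repLength S g ≤ c → ∃ m : ℕ, ∀ v : Word k, m ≤ v.length → secW g v ∈ N by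
    intro g hg
    exact hmain (repLength S g) g hg le_rfl
  intro c
  induction c with
  | zero =>
    intro g hg hrl
    obtain ⟨L, hrep⟩ := exists_rep hg
    have hne : {m | ∃ L, IsRepOf S L g ∧ L.length = m}.Nonempty := ⟨L.length, L, hrep, rfl⟩
    obtain ⟨L', hrep', hlen'⟩ := Nat.sInf_mem hne
    have hrl0 : sInf {m | ∃ L, IsRepOf S L g ∧ L.length = m} ≤ 0 := hrl
    have hL' : L' = [] := List.length_eq_zero_iff.mp (by omega)
    have hg1 : g = 1 := by rw [← hrep'.2, hL', List.prod_nil]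
    subst hg1
    exact ⟨0, fun v _ => by rw [secW_one]; exact hone_mem⟩
  | succ c ih =>
    intro g hg hrl
    obtain ⟨L, hrepL⟩ := exists_rep hg
    have hne : {m | ∃ L, IsRepOf S L g ∧ L.length = m}.Nonempty := ⟨L.length, L, hrepL, rfl⟩
    obtain ⟨L₁, hrep, hlen⟩ := Nat.sInf_mem hne
    set L₀ := L₁.filter (fun s => s ≠ 1) with hL₀
    have hprod₀ : L₀.prod = g := by rw [hL₀, prod_filter_ne_one, hrep.2]
    have hmem₀ : ∀ s ∈ L₀, s ∈ L₁ := fun s hs => (List.mem_filter.mp hs).1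
    have hne₀ : ∀ s ∈ L₀, s ≠ 1 := by
      intro s hs
      have := (List.mem_filter.mp hs).2
      simpa using this
    have hrep₀ : ∀ s ∈ L₀, s ∈ S ∨ s⁻¹ ∈ S := fun s hs => hrep.1 s (hmem₀ s hs)
    have hhw₀ : ∀ s ∈ L₀, IsHanoiWith s (inactivePegs s) :=
      fun s hs => letters_hw hS (hrep₀ s hs)
    by_cases hE : ∃ j : Fin k, ∀ s ∈ L₀, j ∈ inactivePegs s
    · -- essential representation: all sections stay in the nucleus
      obtain ⟨j, hj⟩ := hE
      refine ⟨0, fun v _ => ?_⟩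
      obtain ⟨M, hMsub, hMsec⟩ := secW_listProd hhw₀ v
      rw [← hprod₀, hMsec]
      right
      apply Set.mem_iUnion.mpr
      exact ⟨j, M, fun s hs => ⟨hrep₀ s (hMsub s hs), hne₀ s (hMsub s hs),
        hj s (hMsub s hs)⟩, rfl⟩
    · -- no common inactive peg: all first-level sections get shorter
      push_neg at hE
      by_cases hnil : L₀ = []
      · have hg1 : g = 1 := by rw [← hprod₀, hnil, List.prod_nil]
        subst hg1
        exact ⟨0, fun v _ => by rw [secW_one]; exact hone_mem⟩
      · have hrl' : sInf {m | ∃ L, IsRepOf S L g ∧ L.length = m} ≤ c + 1 := hrl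
        have hlen₀pos : 0 < L₀.length := List.length_pos_iff.mpr hnil
        have hlenle : L₀.length ≤ L₁.length := List.length_filter_le _ _
        have hshort : ∀ x : Fin k, ∃ mx : ℕ, ∀ v : Word k, mx ≤ v.length →
            secW (sec g x) v ∈ N := by
          intro x
          obtain ⟨M, hMsub, hMsec, hMlen⟩ := sec_listProd_short hhw₀ (hE x)
          have hsecg : sec g x = M.prod := by rw [← hprod₀]; exact hMsec
          have hMrep : ∀ s ∈ M, s ∈ S ∨ s⁻¹ ∈ S := fun s hs => hrep₀ s (hMsub.mem hs)
          have hmemcl : sec g x ∈ Subgroup.closure S := by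
            rw [hsecg]
            exact rep_mem_closure hMrep
          have hrlM : repLength S (sec g x) ≤ c := by
            have h1 : sInf {m | ∃ L, IsRepOf S L (sec g x) ∧ L.length = m} ≤ M.length :=
              Nat.sInf_le ⟨M, ⟨hMrep, hsecg.symm⟩, rfl⟩
            have h2 : repLength S (sec g x) ≤ M.length := h1
            omega
          exact ih (sec g x) hmemcl hrlM
        choose mf hmf using hshort
        refine ⟨1 + Finset.univ.sup mf, fun v hv => ?_⟩
        cases v with
        | nil => simp at hv
        | cons x v' =>
          have hsup : mf x ≤ Finset.univ.sup mf := Finset.le_sup (Finset.mem_univ x)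
          have hlenv : mf x ≤ v'.length := by
            simp only [List.length_cons] at hv
            omega
          exact hmf x v' hlenv

end Assembly

end AuxProofs

/-- Proposition: Hanoi groups generated by subsets of
`R̄_{k,n}` are contracting. -/
theorem Rover_contracting {k n : ℕ} (hn : 1 ≤ n) (hk : 2 * n + 1 ≤ k)
    (S : Set (Equiv.Perm (Word k))) (hS1 : (1 : Equiv.Perm (Word k)) ∈ S)
    (hS : S ⊆ Rover k n) :
    IsContracting (Subgroup.closure S) := by
  exact Rover_contracting' hn hk S hS1 hS

end Hanoi
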